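/- Every perfect coloring of the infinite path graph, up to renaming colors and translation/reflection of ℤ, is one of: a cyclic coloring c(n) = n mod k; a mirror coloring of type (1,1), (1,2), or (2,2). Equivalently: if c : ℤ → I is a perfect coloring using all colors of I with |I| = k, then c is periodic with period dividing k, 2k−2, 2k−1, or 2k, and within a period each color appears at most twice with the colors arranged monotonically up then down. -/

import Mathlib

/-- The infinite path graph on the integers. -/
def pathGraph : SimpleGraph ℤ := SimpleGraph.fromRel (fun u v => v = u + 1)

/-- Number of neighbors of `v` colored `j` under coloring `c`. -/
noncomputable def nbrCount {V I : Type*} (G : SimpleGraph V) (c : V → I) (v : V) (j : I) : ℕ :=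
  {u | G.Adj v u ∧ c u = j}.ncard

/-- A coloring is perfect if the number of neighbors of each color depends only
on the color of the vertex. -/
def IsPerfectColoring {V I : Type*} (G : SimpleGraph V) (c : V → I) : Prop :=
  ∀ v w, c v = c w → ∀ j, nbrCount G c v j = nbrCount G c w j

/-- Lexicographic product of two simple graphs. -/
def lexProd {V W : Type*} (G : SimpleGraph V) (H : SimpleGraph W) : SimpleGraph (V × W) :=
  SimpleGraph.fromRel (fun p q => G.Adj p.1 q.1 ∨ (p.1 = q.1 ∧ H.Adj p.2 q.2))
/-- The cyclic coloring with period `[0 1 … k-1]`. -/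
def cycCol (k : ℤ) : ℤ → ℤ := fun n => n % k

/-- The mirror coloring of type (1,1), period `[k-1 … 1 0 1 … k-2]`. -/
def mirror11 (k : ℤ) : ℤ → ℤ := fun n => |n % (2 * k - 2) - (k - 1)|

/-- The mirror coloring of type (1,2), period `[k-1 … 1 0 1 … k-1]`. -/
def mirror12 (k : ℤ) : ℤ → ℤ := fun n => |n % (2 * k - 1) - (k - 1)|

/-- The mirror coloring of type (2,2), period `[k-1 … 1 0 0 1 … k-1]`. -/
def mirror22 (k : ℤ) : ℤ → ℤ := fun n => min (n % (2 * k)) (2 * k - 1 - n % (2 * k))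

set_option linter.unreachableTactic false
set_option linter.unnecessarySeqFocus false
set_option linter.unusedTactic false

lemma dvd_small {p z : ℤ} (hp : 0 < p) (h : p ∣ z) (h2 : -p < z) (h3 : z < p) : z = 0 :=
  Int.eq_zero_of_dvd_of_natAbs_lt_natAbs h (by omega)

lemma cyc_char {p x y : ℤ} : cycCol p x = cycCol p y ↔ p ∣ x - y := by
  unfold cycCol
  rw [Int.emod_eq_emod_iff_emod_sub_eq_zero]
  exact ⟨Int.dvd_of_emod_eq_zero, Int.emod_eq_zero_of_dvd⟩

lemma m11_char {k x y : ℤ} (hk : 2 ≤ k) :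
    mirror11 k x = mirror11 k y ↔ ((2*k-2) ∣ x - y ∨ (2*k-2) ∣ x + y) := by
  have hppos : (0:ℤ) < 2*k-2 := by omega
  unfold mirror11
  set a := x % (2*k-2) with ha
  set b := y % (2*k-2) with hb
  have ha1 : 0 ≤ a := Int.emod_nonneg x (by omega)
  have ha2 : a < 2*k-2 := Int.emod_lt_of_pos x hppos
  have hb1 : 0 ≤ b := Int.emod_nonneg y (by omega)
  have hb2 : b < 2*k-2 := Int.emod_lt_of_pos y hppos
  obtain ⟨u, hu⟩ : (2*k-2) ∣ x - a := Int.dvd_self_sub_of_emod_eq ha.symm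
  obtain ⟨v, hv⟩ : (2*k-2) ∣ y - b := Int.dvd_self_sub_of_emod_eq hb.symm
  rw [abs_eq_abs]
  constructor
  · rintro (hobs | hobs)
    · exact Or.inl ⟨u - v, by rw [mul_sub]; linarith⟩
    · exact Or.inr ⟨u + v + 1, by rw [mul_add, mul_add, mul_one]; linarith⟩
  · rintro (⟨w, hw⟩ | ⟨w, hw⟩)
    · have hd : a - b = (2*k-2) * (w - u + v) := by linear_combination hw - hu + hv
      have := dvd_small hppos ⟨w - u + v, hd⟩ (by omega) (by omega)
      left; omega
    · by_cases hcase : a + b < 2*k-2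
      · have hd : a + b = (2*k-2) * (w - u - v) := by linear_combination hw - hu - hv
        have := dvd_small hppos ⟨w - u - v, hd⟩ (by omega) (by omega)
        left; omega
      · have hd : a + b - (2*k-2) = (2*k-2) * (w - u - v - 1) := by
          linear_combination hw - hu - hv
        have := dvd_small hppos ⟨w - u - v - 1, hd⟩ (by omega) (by omega)
        right; omega

lemma m12_char {k x y : ℤ} (hk : 1 ≤ k) :
    mirror12 k x = mirror12 k y ↔ ((2*k-1) ∣ x - y ∨ (2*k-1) ∣ x + y + 1) := by
  have hppos : (0:ℤ) < 2*k-1 := by omega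
  unfold mirror12
  set a := x % (2*k-1) with ha
  set b := y % (2*k-1) with hb
  have ha1 : 0 ≤ a := Int.emod_nonneg x (by omega)
  have ha2 : a < 2*k-1 := Int.emod_lt_of_pos x hppos
  have hb1 : 0 ≤ b := Int.emod_nonneg y (by omega)
  have hb2 : b < 2*k-1 := Int.emod_lt_of_pos y hppos
  obtain ⟨u, hu⟩ : (2*k-1) ∣ x - a := Int.dvd_self_sub_of_emod_eq ha.symm
  obtain ⟨v, hv⟩ : (2*k-1) ∣ y - b := Int.dvd_self_sub_of_emod_eq hb.symm
  rw [abs_eq_abs]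
  constructor
  · rintro (hobs | hobs)
    · exact Or.inl ⟨u - v, by rw [mul_sub]; linarith⟩
    · exact Or.inr ⟨u + v + 1, by rw [mul_add, mul_add, mul_one]; linarith⟩
  · rintro (⟨w, hw⟩ | ⟨w, hw⟩)
    · have hd : a - b = (2*k-1) * (w - u + v) := by linear_combination hw - hu + hv
      have := dvd_small hppos ⟨w - u + v, hd⟩ (by omega) (by omega)
      left; omega
    · have hd : a + b + 1 - (2*k-1) = (2*k-1) * (w - u - v - 1) := by
        linear_combination hw - hu - hv
      have := dvd_small hppos ⟨w - u - v - 1, hd⟩ (by omega) (by omega)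
      right; omega

lemma m22_char {k x y : ℤ} (hk : 1 ≤ k) :
    mirror22 k x = mirror22 k y ↔ ((2*k) ∣ x - y ∨ (2*k) ∣ x + y + 1) := by
  have hppos : (0:ℤ) < 2*k := by omega
  unfold mirror22
  set a := x % (2*k) with ha
  set b := y % (2*k) with hb
  have ha1 : 0 ≤ a := Int.emod_nonneg x (by omega)
  have ha2 : a < 2*k := Int.emod_lt_of_pos x hppos
  have hb1 : 0 ≤ b := Int.emod_nonneg y (by omega)
  have hb2 : b < 2*k := Int.emod_lt_of_pos y hppos
  obtain ⟨u, hu⟩ : (2*k) ∣ x - a := Int.dvd_self_sub_of_emod_eq ha.symm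
  obtain ⟨v, hv⟩ : (2*k) ∣ y - b := Int.dvd_self_sub_of_emod_eq hb.symm
  have hmin : min a (2*k-1-a) = min b (2*k-1-b) ↔ (a = b ∨ a + b = 2*k-1) := by omega
  rw [hmin]
  constructor
  · rintro (hobs | hobs)
    · exact Or.inl ⟨u - v, by rw [mul_sub]; linarith⟩
    · exact Or.inr ⟨u + v + 1, by rw [mul_add, mul_add, mul_one]; linarith⟩
  · rintro (⟨w, hw⟩ | ⟨w, hw⟩)
    · have hd : a - b = (2*k) * (w - u + v) := by linear_combination hw - hu + hv
      have := dvd_small hppos ⟨w - u + v, hd⟩ (by omega) (by omega)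
      left; omega
    · have hd : a + b + 1 - 2*k = (2*k) * (w - u - v - 1) := by
        linear_combination hw - hu - hv
      have := dvd_small hppos ⟨w - u - v - 1, hd⟩ (by omega) (by omega)
      right; omega

lemma cyc_range {p t : ℤ} (hp : 0 < p) :
    Set.range (fun n => cycCol p (n + t)) = Set.Ico 0 p := by
  unfold cycCol
  ext v
  simp only [Set.mem_range, Set.mem_Ico]
  constructor
  · rintro ⟨n, rfl⟩
    exact ⟨Int.emod_nonneg _ (by omega), Int.emod_lt_of_pos _ hp⟩
  · rintro ⟨h1, h2⟩
    exact ⟨v - t, by rw [sub_add_cancel, Int.emod_eq_of_lt h1 h2]⟩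

lemma m11_range {k t : ℤ} (hk : 2 ≤ k) :
    Set.range (fun n => mirror11 k (n + t)) = Set.Icc 0 (k-1) := by
  unfold mirror11
  have hp : (0:ℤ) < 2*k-2 := by omega
  ext v
  simp only [Set.mem_range, Set.mem_Icc]
  constructor
  · rintro ⟨n, rfl⟩
    have h1 : 0 ≤ (n+t) % (2*k-2) := Int.emod_nonneg _ (by omega)
    have h2 : (n+t) % (2*k-2) < 2*k-2 := Int.emod_lt_of_pos _ hp
    rcases abs_cases ((n+t) % (2*k-2) - (k-1)) with ⟨he, h3⟩ | ⟨he, h3⟩ <;> rw [he] <;> omega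
  · rintro ⟨h1, h2⟩
    refine ⟨k - 1 - v - t, ?_⟩
    rw [sub_add_cancel, Int.emod_eq_of_lt (by omega) (by omega)]
    have e : k - 1 - v - (k-1) = -v := by ring
    rw [e, abs_neg, abs_of_nonneg h1]

lemma m12_range {k t : ℤ} (hk : 1 ≤ k) :
    Set.range (fun n => mirror12 k (n + t)) = Set.Icc 0 (k-1) := by
  unfold mirror12
  have hp : (0:ℤ) < 2*k-1 := by omega
  ext v
  simp only [Set.mem_range, Set.mem_Icc]
  constructor
  · rintro ⟨n, rfl⟩
    have h1 : 0 ≤ (n+t) % (2*k-1) := Int.emod_nonneg _ (by omega)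
    have h2 : (n+t) % (2*k-1) < 2*k-1 := Int.emod_lt_of_pos _ hp
    rcases abs_cases ((n+t) % (2*k-1) - (k-1)) with ⟨he, h3⟩ | ⟨he, h3⟩ <;> rw [he] <;> omega
  · rintro ⟨h1, h2⟩
    refine ⟨k - 1 + v - t, ?_⟩
    rw [sub_add_cancel, Int.emod_eq_of_lt (by omega) (by omega)]
    have : k - 1 + v - (k-1) = v := by ring
    rw [this, abs_of_nonneg h1]

lemma m22_range {k t : ℤ} (hk : 1 ≤ k) :
    Set.range (fun n => mirror22 k (n + t)) = Set.Icc 0 (k-1) := by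
  unfold mirror22
  have hp : (0:ℤ) < 2*k := by omega
  ext v
  simp only [Set.mem_range, Set.mem_Icc]
  constructor
  · rintro ⟨n, rfl⟩
    have h1 : 0 ≤ (n+t) % (2*k) := Int.emod_nonneg _ (by omega)
    have h2 : (n+t) % (2*k) < 2*k := Int.emod_lt_of_pos _ hp
    omega
  · rintro ⟨h1, h2⟩
    refine ⟨v - t, ?_⟩
    rw [sub_add_cancel, Int.emod_eq_of_lt (by omega) (by omega)]
    omega

lemma dvd_shift {p a b : ℤ} (w : ℤ) (hw : a - b = p * w) : (p ∣ a ↔ p ∣ b) := by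
  constructor
  · rintro ⟨q, hq⟩; exact ⟨q - w, by rw [mul_sub]; linarith⟩
  · rintro ⟨q, hq⟩; exact ⟨q + w, by rw [mul_add]; linarith⟩

lemma card_eq {I : Type*} [Fintype I] {c : ℤ → I} (hsurj : Function.Surjective c)
    {e : I → ℤ} (he : Function.Injective e) {M : ℤ → ℤ} (hM : ∀ n, e (c n) = M n) :
    Fintype.card I = (Set.range M).ncard := by
  have hMe : M = e ∘ c := funext fun n => (hM n).symm
  rw [hMe, Set.range_comp, hsurj.range_eq, Set.image_univ, ← Set.image_univ,
    Set.ncard_image_of_injective _ he, Set.ncard_univ, Nat.card_eq_fintype_card]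

lemma ncard_Icc (k : ℤ) : (Set.Icc (0:ℤ) (k-1)).ncard = k.toNat := by
  rw [← Finset.coe_Icc, Set.ncard_coe_finset, Int.card_Icc]
  congr 1
  ring

lemma ncard_Ico (k : ℤ) : (Set.Ico (0:ℤ) k).ncard = k.toNat := by
  rw [← Finset.coe_Ico, Set.ncard_coe_finset, Int.card_Ico]
  congr 1
  ring

section
variable {I : Type*} (c : ℤ → I)

lemma nbr_eq [DecidableEq I] (v : ℤ) (j : I) :
    nbrCount pathGraph c v j =
      (if c (v-1) = j then 1 else 0) + (if c (v+1) = j then 1 else 0) := by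
  classical
  have hset : {u | pathGraph.Adj v u ∧ c u = j}
      = ↑(({v-1, v+1} : Finset ℤ).filter (fun u => c u = j)) := by
    ext u
    simp only [pathGraph, SimpleGraph.fromRel_adj, Set.mem_setOf_eq, Finset.coe_filter,
      Finset.mem_insert, Finset.mem_singleton]
    constructor
    · rintro ⟨⟨hne, h1 | h1⟩, hc⟩ <;> exact ⟨by omega, hc⟩
    · rintro ⟨h1 | h1, hc⟩ <;> exact ⟨⟨by omega, by omega⟩, hc⟩
  rw [nbrCount, hset, Set.ncard_coe_finset]
  have hne : v - 1 ≠ v + 1 := by omega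
  rw [Finset.filter_insert, Finset.filter_singleton]
  split_ifs <;> simp_all

lemma pair_match {α : Type*} [DecidableEq α] (x1 x2 y1 y2 : α)
    (h : ∀ j, ((if x1 = j then 1 else 0) + (if x2 = j then 1 else 0) : ℕ)
            = (if y1 = j then 1 else 0) + (if y2 = j then 1 else 0)) :
    (x1 = y1 ∧ x2 = y2) ∨ (x1 = y2 ∧ x2 = y1) := by
  have h1 := h y1
  have h2 := h y2
  have hc : x1 = y1 ∨ x2 = y1 := by
    by_contra hc
    push_neg at hc
    rw [if_neg hc.1, if_neg hc.2, if_pos rfl] at h1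
    omega
  rcases hc with hc | hc
  · subst hc
    left
    refine ⟨rfl, ?_⟩
    by_contra hne
    rw [if_neg hne, if_pos rfl] at h2
    omega
  · subst hc
    right
    refine ⟨?_, rfl⟩
    by_contra hne
    rw [if_neg hne, if_pos rfl] at h2
    omega

variable [DecidableEq I] (hp : IsPerfectColoring pathGraph c)
include hp

lemma dich {v w : ℤ} (hvw : c v = c w) :
    (c (v-1) = c (w-1) ∧ c (v+1) = c (w+1)) ∨ (c (v-1) = c (w+1) ∧ c (v+1) = c (w-1)) := by
  apply pair_match
  intro j
  have := hp v w hvw j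
  rwa [nbr_eq, nbr_eq] at this

/-- forward determinism -/
lemma detP {x y : ℤ} (h0 : c x = c y) (h1 : c (x+1) = c (y+1)) :
    ∀ d : ℤ, c (x + d) = c (y + d) := by
  have key : ∀ d : ℤ, c (x + d) = c (y + d) ∧ c (x + d + 1) = c (y + d + 1) := by
    intro d
    induction d using Int.induction_on with
    | zero => simpa using ⟨h0, h1⟩
    | succ n ih =>
      refine ⟨by convert ih.2 using 2 <;> push_cast <;> ring, ?_⟩
      rcases dich c hp ih.2 with ⟨_, h⟩ | ⟨h1', h2'⟩
      · convert h using 2 <;> push_cast <;> ring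
      · -- crossing case: c(x+d) = c(y+d+2) and c(x+d+2) = c(y+d)
        have e1 : c (x + n) = c (y + n + 1 + 1) := by
          convert h1' using 2 <;> push_cast <;> ring
        have e2 : c (x + n + 1 + 1) = c (y + n) := by
          convert h2' using 2 <;> push_cast <;> ring
        -- then c(y+n) = c(x+n) = c(y+n+2); combined with ih we still get it
        calc c (x + (n+1) + 1) = c (y + n) := by convert e2 using 2 <;> push_cast <;> ring
          _ = c (x + n) := ih.1.symm
          _ = c (y + (n+1) + 1) := by convert e1 using 2 <;> push_cast <;> ring
    | pred n ih =>
      refine ⟨?_, by convert ih.1 using 2 <;> push_cast <;> ring⟩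
      rcases dich c hp ih.1 with ⟨h, _⟩ | ⟨h1', h2'⟩
      · convert h using 2 <;> push_cast <;> ring
      · have e1 : c (x + -n - 1) = c (y + -n + 1) := by
          convert h1' using 2 <;> push_cast <;> ring
        have e2 : c (x + -n + 1) = c (y + -n - 1) := by
          convert h2' using 2 <;> push_cast <;> ring
        calc c (x + (-n-1)) = c (y + -n + 1) := by convert e1 using 2 <;> push_cast <;> ring
          _ = c (x + -n + 1) := by
              have := ih.2
              rw [show x + -n + 1 = x + -↑n + 1 by ring, show y + -n + 1 = y + -↑n + 1 by ring] at *
              exact this.symm ▸ rfl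
          _ = c (y + (-n-1)) := by convert e2 using 2 <;> push_cast <;> ring
  intro d
  exact (key d).1

set_option linter.unreachableTactic false
set_option linter.unnecessarySeqFocus false
set_option linter.unusedTactic false

/-- reflection determinism -/
lemma detM {x y : ℤ} (h0 : c x = c y) (h1 : c (x+1) = c (y-1)) :
    ∀ d : ℤ, c (x + d) = c (y - d) := by
  have key : ∀ d : ℤ, c (x + d) = c (y - d) ∧ c (x + d + 1) = c (y - d - 1) := by
    intro d
    induction d using Int.induction_on with
    | zero => simpa using ⟨h0, h1⟩
    | succ n ih =>
      refine ⟨by convert ih.2 using 2 <;> push_cast <;> ring, ?_⟩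
      rcases dich c hp ih.2 with ⟨ha, hb⟩ | ⟨ha, hb⟩
      · -- matching: c(x+n)=c(y-n-2), c(x+n+2)=c(y-n)
        calc c (x + (n+1) + 1) = c (y - n) := by
              convert hb using 2 <;> push_cast <;> ring
          _ = c (x + n) := ih.1.symm
          _ = c (y - (n+1) - 1) := by convert ha using 2 <;> push_cast <;> ring
      · -- crossing gives it directly: c(x+n+2) = c(y-n-2)
        convert hb using 2 <;> push_cast <;> ring
    | pred n ih =>
      refine ⟨?_, by convert ih.1 using 2 <;> push_cast <;> ring⟩
      rcases dich c hp ih.1 with ⟨ha, hb⟩ | ⟨ha, hb⟩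
      · -- matching: c(x-n-1)=c(y+n-1), c(x-n+1)=c(y+n+1)
        calc c (x + (-n-1)) = c (y - -n - 1) := by
              convert ha using 2 <;> push_cast <;> ring
          _ = c (x + -n + 1) := ih.2.symm
          _ = c (y - (-n-1)) := by convert hb using 2 <;> push_cast <;> ring
      · convert ha using 2 <;> push_cast <;> ring
  intro d
  exact (key d).1

def Per (t : ℤ) : Prop := ∀ n : ℤ, c (n + t) = c n

omit hp [DecidableEq I] in
lemma per_mul {t : ℤ} (ht : Per c t) : ∀ z : ℤ, Per c (t * z) := by
  intro z
  induction z using Int.induction_on with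
  | zero => intro n; simp
  | succ m ih => intro n
                 have : n + t * (m + 1) = (n + t * m) + t := by ring
                 rw [this, ht, ih]
  | pred m ih =>
      intro n
      have h2 := ht (n + t * (-(m:ℤ) - 1))
      have e : n + t * (-(m:ℤ) - 1) + t = n + t * (-(m:ℤ)) := by ring
      rw [e] at h2
      calc c (n + t * (-(m:ℤ) - 1)) = c (n + t * (-(m:ℤ))) := h2.symm
        _ = c n := by simpa using ih n

lemma exists_per [Fintype I] : ∃ q : ℕ, 0 < q ∧ Per c (q : ℤ) := by
  classical
  have hcard : (Finset.univ : Finset (I × I)).card <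
      (Finset.range (Fintype.card (I × I) + 1)).card := by
    simp [Finset.card_univ]
  obtain ⟨x, -, y, -, hxy, hfeq⟩ :=
    Finset.exists_ne_map_eq_of_card_lt_of_maps_to hcard
      (f := fun n : ℕ => (c n, c (n + 1))) (fun a _ => Finset.mem_univ _)
  have h0 : c (x : ℤ) = c (y : ℤ) := congrArg Prod.fst hfeq
  have h1 : c ((x : ℤ) + 1) = c ((y : ℤ) + 1) := by
    have := congrArg Prod.snd hfeq
    simpa using this
  rcases Nat.lt_or_ge x y with hlt | hge
  · refine ⟨y - x, by omega, fun n => ?_⟩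
    have := detP c hp h0 h1 (n - x)
    have e : (x : ℤ) + (n - x) = n := by ring
    rw [e] at this
    rw [this]
    congr 1
    push_cast [Nat.cast_sub hlt.le]
    ring
  · have hgt : y < x := by omega
    refine ⟨x - y, by omega, fun n => ?_⟩
    have := detP c hp h0.symm h1.symm (n - y)
    have e : (y : ℤ) + (n - y) = n := by ring
    rw [e] at this
    rw [this]
    congr 1
    push_cast [Nat.cast_sub hgt.le]
    ring

lemma exists_min_per [Fintype I] :
    ∃ p : ℤ, 0 < p ∧ Per c p ∧ ∀ t : ℤ, Per c t → p ∣ t := by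
  classical
  obtain hex := exists_per c hp
  set p := Nat.find hex with hpdef
  have hps := Nat.find_spec hex
  refine ⟨p, by exact_mod_cast hps.1, hps.2, ?_⟩
  intro t ht
  have hmul : Per c ((p:ℤ) * (t / p)) := per_mul c hps.2 _
  have hr : Per c (t % p) := by
    intro n
    calc c (n + t % p) = c (n + t % p + p * (t/p)) := (hmul (n + t % p)).symm
      _ = c (n + t) := by rw [add_assoc, Int.emod_add_mul_ediv]
      _ = c n := ht n
  by_contra hdvd
  have hr0 : t % (p:ℤ) ≠ 0 := fun hz => hdvd (Int.dvd_of_emod_eq_zero hz)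
  have hppos : (0:ℤ) < p := by exact_mod_cast hps.1
  have hlb : 0 ≤ t % (p:ℤ) := Int.emod_nonneg t (by omega)
  have hub : t % (p:ℤ) < p := Int.emod_lt_of_pos t hppos
  have hlt : (t % (p:ℤ)).toNat < p := by omega
  apply Nat.find_min hex hlt
  refine ⟨by omega, ?_⟩
  have : ((t % (p:ℤ)).toNat : ℤ) = t % p := by omega
  rwa [this]

/-- The fundamental dichotomy: if two vertices share a color, either translation
or reflection relates them. -/
lemma F1fwd {m n : ℤ} (hc : c m = c n) :
    Per c (n - m) ∨ (∀ d : ℤ, c (m + d) = c (n - d)) := by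
  rcases dich c hp hc with ⟨-, h1⟩ | ⟨-, h1⟩
  · left
    intro x
    have := detP c hp hc h1 (x - m)
    have e : m + (x - m) = x := by ring
    rw [e] at this
    rw [this]
    congr 1
    ring
  · right
    exact detM c hp hc h1

end



/-- Classification: every perfect coloring of the infinite path graph is, up to
renaming colors and translation/reflection of ℤ, a cyclic coloring or a mirror
coloring of type (1,1), (1,2) or (2,2). -/
theorem perfectColoring_path_classification {I : Type*} [Fintype I]
    (c : ℤ → I) (hsurj : Function.Surjective c)
    (h : IsPerfectColoring pathGraph c) :
    ∃ e : I → ℤ, Function.Injective e ∧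
      ∃ ε t : ℤ, (ε = 1 ∨ ε = -1) ∧
        ((∀ n : ℤ, e (c n) = cycCol (Fintype.card I) (ε * n + t)) ∨
         (∀ n : ℤ, e (c n) = mirror11 (Fintype.card I) (ε * n + t)) ∨
         (∀ n : ℤ, e (c n) = mirror12 (Fintype.card I) (ε * n + t)) ∨
         (∀ n : ℤ, e (c n) = mirror22 (Fintype.card I) (ε * n + t))) := by
  classical
  obtain ⟨p, hp0, hper, hdvd⟩ := exists_min_per c h
  have hinv : ∀ i, c (Function.invFun c i) = i := fun i => Function.invFun_eq (hsurj i)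
  have hkey_per : ∀ {m n : ℤ}, p ∣ m - n → c m = c n := by
    rintro m n ⟨z, hz⟩
    have hmn := per_mul c hper z n
    have e : m = n + p * z := by linarith
    rw [e, hmn]
  by_cases hrefl : ∃ s : ℤ, ∀ d : ℤ, c d = c (s - d)
  · obtain ⟨s, hs⟩ := hrefl
    have key : ∀ m n : ℤ, c m = c n ↔ (p ∣ m - n ∨ p ∣ m + n - s) := by
      intro m n
      constructor
      · intro hc
        rcases F1fwd c h hc with hper' | href'
        · left
          obtain ⟨z, hz⟩ := hdvd _ hper'
          exact ⟨-z, by rw [mul_neg]; linarith⟩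
        · right
          have hper2 : Per c (s - m - n) := by
            intro x
            have h1 := href' (x - m)
            have h2 := hs (n - (x - m))
            have e1 : m + (x - m) = x := by ring
            have e2 : s - (n - (x - m)) = x + (s - m - n) := by ring
            rw [e1] at h1
            rw [e2] at h2
            exact (h1.trans h2).symm
          obtain ⟨z, hz⟩ := hdvd _ hper2
          exact ⟨-z, by rw [mul_neg]; linarith⟩
      · rintro (hd | hd)
        · exact hkey_per hd
        · obtain ⟨z, hz⟩ := hd
          have h1 := hs m
          have h2 : c (s - m) = c n := hkey_per ⟨-z, by rw [mul_neg]; linarith⟩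
          rw [h1, h2]
    rcases Int.even_or_odd p with ⟨ph, hph⟩ | ⟨ph, hph⟩
    · -- p even
      rcases Int.even_or_odd s with ⟨u, hu⟩ | ⟨u, hu⟩
      · -- s even : mirror11 with k' = p/2 + 1
        set k' := ph + 1 with hk'def
        have hk2 : 2 ≤ k' := by omega
        have hpk : p = 2*k' - 2 := by omega
        set t : ℤ := -u with htdef
        set M : ℤ → ℤ := fun n => mirror11 k' (n + t) with hMdef
        have hM : ∀ m n : ℤ, M m = M n ↔ (p ∣ m - n ∨ p ∣ m + n - s) := by
          intro m n
          rw [hMdef]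
          simp only []
          rw [m11_char hk2, ← hpk]
          have e1 : (m+t) - (n+t) = m - n := by ring
          have e2 : (m+t) + (n+t) = m + n - s := by omega
          rw [e1, e2]
        have hec : ∀ n, (fun i => M (Function.invFun c i)) (c n) = M n := by
          intro n
          exact (hM _ _).mpr ((key _ _).mp (hinv (c n)))
        have einj : Function.Injective (fun i => M (Function.invFun c i)) := by
          intro i j hij
          have := (key _ _).mpr ((hM _ _).mp hij)
          rwa [hinv, hinv] at this
        have hcard := card_eq hsurj einj hec
        rw [hMdef, m11_range hk2, ncard_Icc] at hcard
        have hcast : (Fintype.card I : ℤ) = k' := by omega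
        refine ⟨_, einj, 1, t, Or.inl rfl, Or.inr (Or.inl fun n => ?_)⟩
        rw [hcast]
        have e3 : 1 * n + t = n + t := by ring
        rw [e3]
        exact hec n
      · -- s odd : mirror22 with k' = p/2
        set k' := ph with hk'def
        have hk1 : 1 ≤ k' := by omega
        have hpk : p = 2*k' := by omega
        set t : ℤ := -u - 1 with htdef
        set M : ℤ → ℤ := fun n => mirror22 k' (n + t) with hMdef
        have hM : ∀ m n : ℤ, M m = M n ↔ (p ∣ m - n ∨ p ∣ m + n - s) := by
          intro m n
          rw [hMdef]
          simp only []
          rw [m22_char hk1, ← hpk]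
          have e1 : (m+t) - (n+t) = m - n := by ring
          have e2 : (m+t) + (n+t) + 1 = m + n - s := by omega
          rw [e1, e2]
        have hec : ∀ n, (fun i => M (Function.invFun c i)) (c n) = M n := by
          intro n
          exact (hM _ _).mpr ((key _ _).mp (hinv (c n)))
        have einj : Function.Injective (fun i => M (Function.invFun c i)) := by
          intro i j hij
          have := (key _ _).mpr ((hM _ _).mp hij)
          rwa [hinv, hinv] at this
        have hcard := card_eq hsurj einj hec
        rw [hMdef, m22_range hk1, ncard_Icc] at hcard
        have hcast : (Fintype.card I : ℤ) = k' := by omega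
        refine ⟨_, einj, 1, t, Or.inl rfl, Or.inr (Or.inr (Or.inr fun n => ?_))⟩
        rw [hcast]
        have e3 : 1 * n + t = n + t := by ring
        rw [e3]
        exact hec n
    · -- p odd : mirror12 with k' = (p+1)/2
      set k' := ph + 1 with hk'def
      have hk1 : 1 ≤ k' := by omega
      have hpk : p = 2*k' - 1 := by omega
      set t : ℤ := k' * (p - 1 - s) with htdef
      have hw : (2 * t + 1 + s) = p * (p - s) := by
        rw [htdef, hpk]
        ring
      set M : ℤ → ℤ := fun n => mirror12 k' (n + t) with hMdef
      have hM : ∀ m n : ℤ, M m = M n ↔ (p ∣ m - n ∨ p ∣ m + n - s) := by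
        intro m n
        rw [hMdef]
        simp only []
        rw [m12_char hk1, ← hpk]
        have e1 : (m+t) - (n+t) = m - n := by ring
        rw [e1]
        have e4 : ((m+t) + (n+t) + 1) - (m + n - s) = p * (p - s) := by
          rw [← hw]; ring
        rw [dvd_shift (p - s) e4]
      have hec : ∀ n, (fun i => M (Function.invFun c i)) (c n) = M n := by
        intro n
        exact (hM _ _).mpr ((key _ _).mp (hinv (c n)))
      have einj : Function.Injective (fun i => M (Function.invFun c i)) := by
        intro i j hij
        have := (key _ _).mpr ((hM _ _).mp hij)
        rwa [hinv, hinv] at this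
      have hcard := card_eq hsurj einj hec
      rw [hMdef, m12_range hk1, ncard_Icc] at hcard
      have hcast : (Fintype.card I : ℤ) = k' := by omega
      refine ⟨_, einj, 1, t, Or.inl rfl, Or.inr (Or.inr (Or.inl fun n => ?_))⟩
      rw [hcast]
      have e3 : 1 * n + t = n + t := by ring
      rw [e3]
      exact hec n
  · -- no reflection : cyclic
    have key : ∀ m n : ℤ, c m = c n ↔ p ∣ m - n := by
      intro m n
      constructor
      · intro hc
        rcases F1fwd c h hc with hper' | href'
        · obtain ⟨z, hz⟩ := hdvd _ hper'
          exact ⟨-z, by rw [mul_neg]; linarith⟩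
        · exfalso
          apply hrefl
          refine ⟨m + n, fun d => ?_⟩
          have h1 := href' (d - m)
          have e1 : m + (d - m) = d := by ring
          have e2 : n - (d - m) = m + n - d := by ring
          rw [e1, e2] at h1
          exact h1
      · exact fun hd => hkey_per hd
    set t : ℤ := 0 with htdef
    set M : ℤ → ℤ := fun n => cycCol p (n + t) with hMdef
    have hM : ∀ m n : ℤ, M m = M n ↔ p ∣ m - n := by
      intro m n
      rw [hMdef]
      simp only []
      rw [cyc_char]
      have e1 : (m+t) - (n+t) = m - n := by ring
      rw [e1]
    have hec : ∀ n, (fun i => M (Function.invFun c i)) (c n) = M n := by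
      intro n
      exact (hM _ _).mpr ((key _ _).mp (hinv (c n)))
    have einj : Function.Injective (fun i => M (Function.invFun c i)) := by
      intro i j hij
      have := (key _ _).mpr ((hM _ _).mp hij)
      rwa [hinv, hinv] at this
    have hcard := card_eq hsurj einj hec
    rw [hMdef, cyc_range hp0, ncard_Ico] at hcard
    have hcast : (Fintype.card I : ℤ) = p := by omega
    refine ⟨_, einj, 1, t, Or.inl rfl, Or.inl fun n => ?_⟩
    rw [hcast]
    have e3 : 1 * n + t = n + t := by ring
    rw [e3]
    exact hec n
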